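/- arXiv:2212.14259 — 4 statements merged into one kernel-verified Lean document; each statement's English description precedes it below -/
import Mathlib

section
/- Let 𝒬 ⊂ 𝔓_c(Ω) be non-empty. A non-empty set 𝒞 ⊂ L⁰_c is 𝒫-sensitive with reduction set 𝒬 if and only if 𝒞 is 𝒬-stable. -/
open MeasureTheory Filter Set
open scoped ENNReal

namespace Robust

variable {Ω : Type*} [MeasurableSpace Ω]

/-- `Q` vanishes on every `𝔓`-polar set, i.e. `Q ≪ 𝔓`. -/
def AC (𝔓 : Set (Measure Ω)) (Q : Measure Ω) : Prop :=
  ∀ N : Set Ω, MeasurableSet N → (∀ P ∈ 𝔓, P N = 0) → Q N = 0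

/-- `𝔓_c(Ω)`: probability measures vanishing on all `𝔓`-polar sets. -/
def PC (𝔓 : Set (Measure Ω)) : Set (Measure Ω) :=
  {Q | IsProbabilityMeasure Q ∧ AC 𝔓 Q}

/-- `𝔓`-quasi-sure equality of random variables. -/
def QSEq (𝔓 : Set (Measure Ω)) (f g : Ω → ℝ) : Prop := ∀ P ∈ 𝔓, f =ᵐ[P] g

/-- The `𝔓`-quasi-sure order. -/
def QSLe (𝔓 : Set (Measure Ω)) (f g : Ω → ℝ) : Prop := ∀ P ∈ 𝔓, f ≤ᵐ[P] g

/-- Representatives of elements of `L⁰`: the measurable functions. -/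
def L0 (Ω : Type*) [MeasurableSpace Ω] : Set (Ω → ℝ) := {f | Measurable f}

/-- Representatives of elements of the positive cone `L⁰_{c+}`. -/
def L0pos (𝔓 : Set (Measure Ω)) : Set (Ω → ℝ) :=
  {f | Measurable f ∧ QSLe 𝔓 (fun _ => 0) f}

/-- Representatives of elements of `L^∞_c`. -/
def Linf (𝔓 : Set (Measure Ω)) : Set (Ω → ℝ) :=
  {f | Measurable f ∧ ∃ m : ℝ, 0 < m ∧ QSLe 𝔓 (fun ω => |f ω|) (fun _ => m)}

/-- Representatives of elements of `L^∞_{c+}`. -/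
def LinfPos (𝔓 : Set (Measure Ω)) : Set (Ω → ℝ) :=
  {f | f ∈ Linf 𝔓 ∧ QSLe 𝔓 (fun _ => 0) f}

/-- A set of functions representing a set of equivalence classes in `L⁰_c`:
it consists of measurable functions and is saturated under `𝔓`-q.s. equality. -/
def IsL0Set (𝔓 : Set (Measure Ω)) (𝒞 : Set (Ω → ℝ)) : Prop :=
  𝒞 ⊆ L0 Ω ∧ ∀ f ∈ 𝒞, ∀ g : Ω → ℝ, Measurable g → QSEq 𝔓 f g → g ∈ 𝒞

/-- Function-level version of `j_Q⁻¹ (j_Q 𝒞)` (equivalently, of the subset `j_Q 𝒞` of `L⁰_Q`):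
the `Q`-a.s. saturation of `𝒞`. -/
def jSat (Q : Measure Ω) (𝒞 : Set (Ω → ℝ)) : Set (Ω → ℝ) :=
  {f | Measurable f ∧ ∃ g ∈ 𝒞, f =ᵐ[Q] g}

/-- `𝒬` is a reduction set for `𝒞`. -/
def IsReductionSet (𝔓 𝒬 : Set (Measure Ω)) (𝒞 : Set (Ω → ℝ)) : Prop :=
  𝒬.Nonempty ∧ 𝒬 ⊆ PC 𝔓 ∧ 𝒞 = ⋂ Q ∈ 𝒬, jSat Q 𝒞

/-- `𝒞` is `𝔓`-sensitive. -/
def Sensitive (𝔓 : Set (Measure Ω)) (𝒞 : Set (Ω → ℝ)) : Prop :=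
  𝒞 = ⋂ Q ∈ PC 𝔓, jSat Q 𝒞

/-- `𝒞` is `𝒬`-closed: closed under sequential convergence in `Q`-probability for all `Q ∈ 𝒬`
simultaneously. -/
def QClosedSet (𝒬 : Set (Measure Ω)) (𝒞 : Set (Ω → ℝ)) : Prop :=
  ∀ (X : ℕ → Ω → ℝ) (x : Ω → ℝ), (∀ n, X n ∈ 𝒞) → Measurable x →
    (∀ Q ∈ 𝒬, TendstoInMeasure Q X atTop x) → x ∈ 𝒞

/-- `𝒞` is locally `Q`-closed. -/
def LocallyQClosed (Q : Measure Ω) (𝒞 : Set (Ω → ℝ)) : Prop :=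
  ∀ (X : ℕ → Ω → ℝ) (x : Ω → ℝ), (∀ n, X n ∈ 𝒞) → Measurable x →
    TendstoInMeasure Q X atTop x → ∃ y ∈ 𝒞, x =ᵐ[Q] y

/-- `𝒞` is solid in `L⁰_c` (w.r.t. the quasi-sure order of `𝔓`). -/
def SolidL0 (𝔓 : Set (Measure Ω)) (𝒞 : Set (Ω → ℝ)) : Prop :=
  ∀ f ∈ 𝒞, ∀ g : Ω → ℝ, Measurable g →
    QSLe 𝔓 (fun ω => |g ω|) (fun ω => |f ω|) → g ∈ 𝒞

/-- `𝒞` is solid in `L⁰_{c+}`. -/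
def SolidPos (𝔓 : Set (Measure Ω)) (𝒞 : Set (Ω → ℝ)) : Prop :=
  𝒞 ⊆ L0pos 𝔓 ∧ ∀ f ∈ 𝒞, ∀ g ∈ L0pos 𝔓, QSLe 𝔓 g f → g ∈ 𝒞

/-- `𝒞` is solid (in either of the two senses). -/
def Solid (𝔓 : Set (Measure Ω)) (𝒞 : Set (Ω → ℝ)) : Prop :=
  SolidL0 𝔓 𝒞 ∨ SolidPos 𝔓 𝒞

/-- `f` is the infimum (greatest lower bound) of the family `Y` in the `𝔓`-q.s. order. -/
def IsQSInf (𝔓 : Set (Measure Ω)) {ι : Sort*} (Y : ι → Ω → ℝ) (f : Ω → ℝ) : Prop :=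
  (∀ a, QSLe 𝔓 f (Y a)) ∧
    ∀ g : Ω → ℝ, Measurable g → (∀ a, QSLe 𝔓 g (Y a)) → QSLe 𝔓 g f

/-- `f` is the supremum (least upper bound) of the family `Y` in the `𝔓`-q.s. order. -/
def IsQSSup (𝔓 : Set (Measure Ω)) {ι : Sort*} (Y : ι → Ω → ℝ) (f : Ω → ℝ) : Prop :=
  (∀ a, QSLe 𝔓 (Y a) f) ∧
    ∀ g : Ω → ℝ, Measurable g → (∀ a, QSLe 𝔓 (Y a) g) → QSLe 𝔓 f g

/-- Order convergence of a sequence in `L⁰_c`. -/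
def SeqOrderConv (𝔓 : Set (Measure Ω)) (X : ℕ → Ω → ℝ) (x : Ω → ℝ) : Prop :=
  ∃ Y : ℕ → Ω → ℝ, (∀ n, Measurable (Y n)) ∧
    (∀ m n : ℕ, m ≤ n → QSLe 𝔓 (Y n) (Y m)) ∧
    IsQSInf 𝔓 Y (fun _ => 0) ∧
    ∀ n, QSLe 𝔓 (fun ω => |X n ω - x ω|) (Y n)

/-- `𝒞` is sequentially order closed. -/
def SeqOrderClosed (𝔓 : Set (Measure Ω)) (𝒞 : Set (Ω → ℝ)) : Prop :=
  ∀ (X : ℕ → Ω → ℝ) (x : Ω → ℝ), (∀ n, X n ∈ 𝒞) → Measurable x →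
    SeqOrderConv 𝔓 X x → x ∈ 𝒞

/-- Order convergence of a net in `L⁰_c`. -/
def NetOrderConv (𝔓 : Set (Measure Ω)) {ι : Type*} [Preorder ι]
    (X : ι → Ω → ℝ) (x : Ω → ℝ) : Prop :=
  ∃ Y : ι → Ω → ℝ, (∀ a, Measurable (Y a)) ∧
    (∀ a b : ι, a ≤ b → QSLe 𝔓 (Y b) (Y a)) ∧
    IsQSInf 𝔓 Y (fun _ => 0) ∧
    ∀ a, QSLe 𝔓 (fun ω => |X a ω - x ω|) (Y a)

/-- `𝒞` is order closed (w.r.t. order convergence of nets). -/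
def OrderClosed (𝔓 : Set (Measure Ω)) (𝒞 : Set (Ω → ℝ)) : Prop :=
  ∀ (ι : Type*) [Preorder ι] [IsDirected ι (· ≤ ·)] [Nonempty ι],
    ∀ (X : ι → Ω → ℝ) (x : Ω → ℝ), (∀ a, X a ∈ 𝒞) → Measurable x →
      NetOrderConv 𝔓 X x → x ∈ 𝒞

/-- Order convergence of all (directed) nets is preserved under `j_Q`. -/
def NetOrderConvTransfer (𝔓 : Set (Measure Ω)) (Q : Measure Ω) : Prop :=
  ∀ (ι : Type*) [Preorder ι] [IsDirected ι (· ≤ ·)] [Nonempty ι],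
    ∀ (X : ι → Ω → ℝ) (x : Ω → ℝ), (∀ a, Measurable (X a)) → Measurable x →
      NetOrderConv 𝔓 X x → NetOrderConv {Q} X x

/-- A measure is supported (relative to the `𝔓`-polar sets). -/
def SupportedMeasure (𝔓 : Set (Measure Ω)) (μ : Measure Ω) : Prop :=
  ∃ S : Set Ω, MeasurableSet S ∧ μ Sᶜ = 0 ∧
    ∀ N : Set Ω, MeasurableSet N → μ (N ∩ S) = 0 → ∀ P ∈ 𝔓, P (N ∩ S) = 0

/-- The (possibly infinite) expectation `E_Q[f]` of a (q.s.) non-negative random variable. -/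
noncomputable def EExp (Q : Measure Ω) (f : Ω → ℝ) : ℝ≥0∞ :=
  ∫⁻ ω, ENNReal.ofReal (f ω) ∂Q

/-- The polar `𝒞°_𝒬` of `𝒞` consisting of pairs `(Q, Z)` with `Q ∈ 𝒬` and `Z` in the
set `Zs` of dual test functions (e.g. `L^∞_{c+}` or `L⁰_{c+}`). -/
def polarPairs (𝒬 : Set (Measure Ω)) (Zs 𝒞 : Set (Ω → ℝ)) :
    Set (Measure Ω × (Ω → ℝ)) :=
  {p | p.1 ∈ 𝒬 ∧ p.2 ∈ Zs ∧ ∀ f ∈ 𝒞, EExp p.1 (fun ω => p.2 ω * f ω) ≤ 1}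

/-- The bipolar `𝒞°°_𝒬` of `𝒞`. -/
def bipolarPairs (𝔓 𝒬 : Set (Measure Ω)) (Zs 𝒞 : Set (Ω → ℝ)) : Set (Ω → ℝ) :=
  {f | f ∈ L0pos 𝔓 ∧ ∀ p ∈ polarPairs 𝒬 Zs 𝒞, EExp p.1 (fun ω => p.2 ω * f ω) ≤ 1}

/-- The polar `𝒞^*_𝒬` with a uniform (supremum) constraint. -/
def starPolar (𝔓 𝒬 : Set (Measure Ω)) (𝒞 : Set (Ω → ℝ)) : Set (Ω → ℝ) :=
  {Z | Z ∈ LinfPos 𝔓 ∧ ∀ f ∈ 𝒞, (⨆ Q ∈ 𝒬, EExp Q fun ω => Z ω * f ω) ≤ 1}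

/-- The bipolar `𝒞^{**}_𝒬` with a uniform (supremum) constraint. -/
def starBipolar (𝔓 𝒬 : Set (Measure Ω)) (𝒞 : Set (Ω → ℝ)) : Set (Ω → ℝ) :=
  {f | f ∈ L0pos 𝔓 ∧ ∀ Z ∈ starPolar 𝔓 𝒬 𝒞, (⨆ Q ∈ 𝒬, EExp Q fun ω => Z ω * f ω) ≤ 1}

/-- `ca_c`: finite signed measures vanishing on all `𝔓`-polar sets. -/
def CAc (𝔓 : Set (Measure Ω)) : Set (SignedMeasure Ω) :=
  {ν | ∀ N : Set Ω, MeasurableSet N → (∀ P ∈ 𝔓, P N = 0) → ν.totalVariation N = 0}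

/-- A signed measure is supported if its total variation is. -/
def SupportedSigned (𝔓 : Set (Measure Ω)) (ν : SignedMeasure Ω) : Prop :=
  SupportedMeasure 𝔓 ν.totalVariation

/-- `sca_c`: supported signed measures in `ca_c`. -/
def SCAc (𝔓 : Set (Measure Ω)) : Set (SignedMeasure Ω) :=
  {ν | ν ∈ CAc 𝔓 ∧ SupportedSigned 𝔓 ν}

/-- A signed measure is non-negative. -/
def nonnegSM (ν : SignedMeasure Ω) : Prop := ∀ N : Set Ω, MeasurableSet N → 0 ≤ ν N

/-- The measure associated to a non-negative signed measure (its Jordan positive part). -/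
noncomputable def posMeas (ν : SignedMeasure Ω) : Measure Ω :=
  ν.toJordanDecomposition.posPart

/-- The pairing `∫ f dν` of a function with a signed measure. -/
noncomputable def pairSM (ν : SignedMeasure Ω) (f : Ω → ℝ) : ℝ :=
  ∫ ω, f ω ∂ν.toJordanDecomposition.posPart - ∫ ω, f ω ∂ν.toJordanDecomposition.negPart

/-- The total variation `|ν|` of a signed measure, as a signed measure. -/
noncomputable def tvSigned (ν : SignedMeasure Ω) : SignedMeasure Ω :=
  ν.toJordanDecomposition.posPart.toSignedMeasure +
    ν.toJordanDecomposition.negPart.toSignedMeasure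

/-- `𝔓` is of class (S). -/
def ClassS (𝔓 : Set (Measure Ω)) : Prop :=
  ∃ 𝒬 : Set (Measure Ω), 𝒬 ⊆ PC 𝔓 ∧ (∀ Q ∈ 𝒬, SupportedMeasure 𝔓 Q) ∧
    ∀ N : Set Ω, MeasurableSet N → ((∀ P ∈ 𝔓, P N = 0) ↔ ∀ Q ∈ 𝒬, Q N = 0)

/-- The polar `𝒞°_{ca}` of `𝒞 ⊂ L⁰_{c+}` inside `ca_{c+}` (non-negative members of `ca_c`). -/
def polarCA (𝔓 : Set (Measure Ω)) (𝒞 : Set (Ω → ℝ)) : Set (SignedMeasure Ω) :=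
  {ν | nonnegSM ν ∧ ν ∈ CAc 𝔓 ∧ ∀ f ∈ 𝒞, EExp (posMeas ν) f ≤ 1}

/-- The bipolar `𝒞°°_{ca}`. -/
def bipolarCA (𝔓 : Set (Measure Ω)) (𝒞 : Set (Ω → ℝ)) : Set (Ω → ℝ) :=
  {f | f ∈ L0pos 𝔓 ∧ ∀ ν ∈ polarCA 𝔓 𝒞, EExp (posMeas ν) f ≤ 1}

/-- The polar `𝒞°_{sca}` of `𝒞 ⊂ L⁰_{c+}` inside `sca_{c+}`. -/
def polarSCA (𝔓 : Set (Measure Ω)) (𝒞 : Set (Ω → ℝ)) : Set (SignedMeasure Ω) :=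
  {ν | nonnegSM ν ∧ ν ∈ SCAc 𝔓 ∧ ∀ f ∈ 𝒞, EExp (posMeas ν) f ≤ 1}

/-- The bipolar `𝒞°°_{sca}`. -/
def bipolarSCA (𝔓 : Set (Measure Ω)) (𝒞 : Set (Ω → ℝ)) : Set (Ω → ℝ) :=
  {f | f ∈ L0pos 𝔓 ∧ ∀ ν ∈ polarSCA 𝔓 𝒞, EExp (posMeas ν) f ≤ 1}

/-- The weak topology `σ(M, L^∞_c)` on a set `M` of signed measures. -/
noncomputable def sigmaTop (𝔓 : Set (Measure Ω)) (M : Set (SignedMeasure Ω)) :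
    TopologicalSpace M :=
  TopologicalSpace.induced
    (fun ν : M => fun X : Linf 𝔓 => pairSM ν.1 X.1) inferInstance

/-- The weak topology `σ(𝒳, 𝒴)` on `𝒳 ⊂ L⁰_c` induced by a set `𝒴` of signed measures. -/
noncomputable def sigmaTopDual (𝒳 : Set (Ω → ℝ)) (𝒴 : Set (SignedMeasure Ω)) :
    TopologicalSpace 𝒳 :=
  TopologicalSpace.induced
    (fun f : 𝒳 => fun ν : 𝒴 => pairSM ν.1 f.1) inferInstance

/-- `𝒞` is `𝒬`-stable: it contains every `𝒬`-aggregator of every `𝒬`-coherent family in `𝒞`. -/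
def QStable (𝒬 : Set (Measure Ω)) (𝒞 : Set (Ω → ℝ)) : Prop :=
  ∀ X : Measure Ω → Ω → ℝ, (∀ Q ∈ 𝒬, X Q ∈ 𝒞) →
    ∀ x : Ω → ℝ, Measurable x → (∀ Q ∈ 𝒬, X Q =ᵐ[Q] x) → x ∈ 𝒞

/-- `𝒞` is `𝒫`-sensitive with reduction set `𝒬` iff `𝒞` is `𝒬`-stable. -/
theorem stmt13 {Ω : Type*} [MeasurableSpace Ω]
    (𝔓 : Set (Measure Ω)) (h𝔓ne : 𝔓.Nonempty)
    (h𝔓prob : ∀ P ∈ 𝔓, IsProbabilityMeasure P)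
    (𝒬 : Set (Measure Ω)) (h𝒬ne : 𝒬.Nonempty) (h𝒬 : 𝒬 ⊆ PC 𝔓)
    (𝒞 : Set (Ω → ℝ)) (h𝒞L0 : IsL0Set 𝔓 𝒞) (h𝒞ne : 𝒞.Nonempty) :
    IsReductionSet 𝔓 𝒬 𝒞 ↔ QStable 𝒬 𝒞 := by
  constructor
  · rintro ⟨-, -, hred⟩ X hX x hx hXx
    rw [hred]
    refine Set.mem_iInter₂.2 fun Q hQ => ⟨hx, X Q, hX Q hQ, (hXx Q hQ).symm⟩
  · intro hstab
    refine ⟨h𝒬ne, h𝒬, Set.Subset.antisymm ?_ ?_⟩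
    · intro f hf
      exact Set.mem_iInter₂.2 fun Q hQ => ⟨h𝒞L0.1 hf, f, hf, Filter.EventuallyEq.rfl⟩
    · intro x hxmem
      have h := Set.mem_iInter₂.1 hxmem
      obtain ⟨Q0, hQ0⟩ := h𝒬ne
      have hx : Measurable x := (h Q0 hQ0).1
      obtain ⟨f0, hf0⟩ := h𝒞ne
      choose! g hg hgeq using fun Q (hQ : Q ∈ 𝒬) => (h Q hQ).2
      classical
      refine hstab (fun Q => if hQ : Q ∈ 𝒬 then g Q else f0) ?_ x hx ?_
      · intro Q hQ; simp only [dif_pos hQ]; exact hg Q hQ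
      · intro Q hQ; simp only [dif_pos hQ]; exact (hgeq Q hQ).symm
end Robust
end

section
/- Let 𝒳 ⊂ L⁰_c and 𝒴 ⊂ ca_c be linear subspaces such that ⟨𝒳,𝒴⟩ is a dual pair under the bilinear pairing (X,μ) ↦ ∫ X dμ (every X ∈ 𝒳 is integrable with respect to every μ ∈ 𝒴, and the pairing separates points of 𝒳 and of 𝒴), and suppose μ ∈ 𝒴 implies |μ| ∈ 𝒴. If 𝒞 ⊂ 𝒳 is non-empty, convex, and σ(𝒳,𝒴)-closed, then there exists a set 𝒬 ⊂ 𝔓_c(Ω) ∩ 𝒴 of probability measures such that 𝒞 = (⋂_{Q∈𝒬} j_Q⁻¹(j_Q(𝒞))) ∩ 𝒳. -/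
open MeasureTheory Filter Set
open scoped ENNReal

namespace Robust

variable {Ω : Type*} [MeasurableSpace Ω]

section Aux

lemma sm_apply' (ν : SignedMeasure Ω) {A : Set Ω} (hA : MeasurableSet A) :
    ν A = (ν.toJordanDecomposition.posPart A).toReal
        - (ν.toJordanDecomposition.negPart A).toReal := by
  conv_lhs => rw [← ν.toSignedMeasure_toJordanDecomposition]
  rw [JordanDecomposition.toSignedMeasure, Measure.toSignedMeasure_sub_apply hA]
  rfl

lemma tvSigned_apply (ν : SignedMeasure Ω) {A : Set Ω} (hA : MeasurableSet A) :
    tvSigned ν A = (ν.toJordanDecomposition.posPart A).toReal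
        + (ν.toJordanDecomposition.negPart A).toReal := by
  rw [tvSigned, VectorMeasure.add_apply, Measure.toSignedMeasure_apply_measurable hA,
    Measure.toSignedMeasure_apply_measurable hA]
  rfl

lemma tvSigned_nonneg (ν : SignedMeasure Ω) {A : Set Ω} (hA : MeasurableSet A) :
    0 ≤ tvSigned ν A := by
  rw [tvSigned_apply ν hA]; positivity

lemma parts_zero (ν : SignedMeasure Ω) {A : Set Ω} (hA : MeasurableSet A)
    (h : tvSigned ν A = 0) :
    ν.toJordanDecomposition.posPart A = 0 ∧ ν.toJordanDecomposition.negPart A = 0 := by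
  rw [tvSigned_apply ν hA] at h
  have h1 : (ν.toJordanDecomposition.posPart A).toReal = 0 ∧
      (ν.toJordanDecomposition.negPart A).toReal = 0 := by
    constructor <;> nlinarith [ENNReal.toReal_nonneg (a := ν.toJordanDecomposition.posPart A),
      ENNReal.toReal_nonneg (a := ν.toJordanDecomposition.negPart A)]
  constructor
  · exact (ENNReal.toReal_eq_zero_iff _).mp h1.1 |>.resolve_right (measure_ne_top _ _)
  · exact (ENNReal.toReal_eq_zero_iff _).mp h1.2 |>.resolve_right (measure_ne_top _ _)

lemma negPart_eq_zero_of_nonneg (ν : SignedMeasure Ω) (h : nonnegSM ν) :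
    ν.toJordanDecomposition.negPart = 0 := by
  obtain ⟨i, hi₁, hi₂, hi₃, hpos, hneg⟩ := ν.toJordanDecomposition_spec
  rw [hneg]
  ext A hA
  rw [SignedMeasure.toMeasureOfLEZero_apply _ hi₃ hi₁.compl hA]
  have h1 : 0 ≤ ν (iᶜ ∩ A) := h _ (hi₁.compl.inter hA)
  have h2 : ν (iᶜ ∩ A) ≤ 0 :=
    VectorMeasure.nonpos_of_restrict_le_zero _
      (VectorMeasure.restrict_le_zero_subset _ hi₁.compl Set.inter_subset_left hi₃)
  have h3 : ν (iᶜ ∩ A) = 0 := le_antisymm h2 h1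
  simp [h3]

lemma pairSM_congr (ν : SignedMeasure Ω) {f g : Ω → ℝ}
    (hp : f =ᵐ[ν.toJordanDecomposition.posPart] g)
    (hn : f =ᵐ[ν.toJordanDecomposition.negPart] g) :
    pairSM ν f = pairSM ν g := by
  rw [pairSM, pairSM, integral_congr_ae hp, integral_congr_ae hn]

lemma pairSM_eq_zero (ν : SignedMeasure Ω) (h : tvSigned ν Set.univ = 0) (f : Ω → ℝ) :
    pairSM ν f = 0 := by
  obtain ⟨h1, h2⟩ := parts_zero ν MeasurableSet.univ h
  rw [pairSM, Measure.measure_univ_eq_zero.mp h1, Measure.measure_univ_eq_zero.mp h2]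
  simp

lemma pairSM_comb (ν : SignedMeasure Ω) {x y : Ω → ℝ} (a b : ℝ)
    (hx : Integrable x ν.totalVariation) (hy : Integrable y ν.totalVariation) :
    pairSM ν (a • x + b • y) = a * pairSM ν x + b * pairSM ν y := by
  rw [SignedMeasure.totalVariation, integrable_add_measure] at hx hy
  have key : ∀ μ : Measure Ω, Integrable x μ → Integrable y μ →
      ∫ ω, (a • x + b • y) ω ∂μ = a * ∫ ω, x ω ∂μ + b * ∫ ω, y ω ∂μ := by
    intro μ hxμ hyμ
    simp only [Pi.add_apply, Pi.smul_apply, smul_eq_mul]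
    rw [integral_add (hxμ.const_mul a) (hyμ.const_mul b)]
    simp only [← smul_eq_mul, integral_smul]
  rw [pairSM, pairSM, pairSM, key _ hx.1 hy.1, key _ hx.2 hy.2]
  ring

lemma sm_sum_apply {ι : Type*} (s : Finset ι) (ν : ι → SignedMeasure Ω) (A : Set Ω) :
    (∑ i ∈ s, ν i) A = ∑ i ∈ s, ν i A := by
  classical
  induction s using Finset.induction_on with
  | empty => simp
  | insert _ _ hi ih =>
    rw [Finset.sum_insert hi, Finset.sum_insert hi, VectorMeasure.add_apply, ih]

end Aux

open Topology in
/-- A convex `σ(𝒳,𝒴)`-closed set is `𝒫`-sensitive in `𝒳` for some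
reduction set `𝒬 ⊂ 𝔓_c(Ω) ∩ 𝒴`. -/
theorem stmt14 {Ω : Type*} [MeasurableSpace Ω]
    (𝔓 : Set (Measure Ω)) (h𝔓ne : 𝔓.Nonempty)
    (h𝔓prob : ∀ P ∈ 𝔓, IsProbabilityMeasure P)
    (𝒳 : Set (Ω → ℝ)) (h𝒳L0 : IsL0Set 𝔓 𝒳)
    (h𝒳zero : (0 : Ω → ℝ) ∈ 𝒳)
    (h𝒳add : ∀ f ∈ 𝒳, ∀ g ∈ 𝒳, f + g ∈ 𝒳)
    (h𝒳smul : ∀ a : ℝ, ∀ f ∈ 𝒳, a • f ∈ 𝒳)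
    (𝒴 : Set (SignedMeasure Ω))
    (h𝒴zero : (0 : SignedMeasure Ω) ∈ 𝒴)
    (h𝒴add : ∀ μ ∈ 𝒴, ∀ ν ∈ 𝒴, μ + ν ∈ 𝒴)
    (h𝒴smul : ∀ a : ℝ, ∀ μ ∈ 𝒴, a • μ ∈ 𝒴)
    (h𝒴ca : ∀ ν ∈ 𝒴, ν ∈ CAc 𝔓)
    (h𝒴tv : ∀ ν ∈ 𝒴, tvSigned ν ∈ 𝒴)
    -- dual pair: integrability and separation of points on both sides
    (hint : ∀ f ∈ 𝒳, ∀ ν ∈ 𝒴, Integrable f ν.totalVariation)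
    (hsep𝒳 : ∀ f ∈ 𝒳, ∀ g ∈ 𝒳, ¬ QSEq 𝔓 f g → ∃ ν ∈ 𝒴, pairSM ν f ≠ pairSM ν g)
    (hsep𝒴 : ∀ μ ∈ 𝒴, ∀ ν ∈ 𝒴, μ ≠ ν → ∃ f ∈ 𝒳, pairSM μ f ≠ pairSM ν f)
    (𝒞 : Set (Ω → ℝ)) (h𝒞ne : 𝒞.Nonempty) (h𝒞𝒳 : 𝒞 ⊆ 𝒳)
    (h𝒞L0 : IsL0Set 𝔓 𝒞) (h𝒞conv : Convex ℝ 𝒞)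
    (h𝒞closed : @IsClosed _ (sigmaTopDual 𝒳 𝒴) {f : 𝒳 | (f : Ω → ℝ) ∈ 𝒞}) :
    ∃ 𝒬 : Set (Measure Ω),
      (∀ Q ∈ 𝒬, Q ∈ PC 𝔓 ∧ ∃ ν ∈ 𝒴, nonnegSM ν ∧ Q = posMeas ν) ∧
      𝒞 = (⋂ Q ∈ 𝒬, jSat Q 𝒞) ∩ 𝒳 := by
  classical
  refine ⟨{Q | Q ∈ PC 𝔓 ∧ ∃ ν ∈ 𝒴, nonnegSM ν ∧ Q = posMeas ν}, fun Q hQ => hQ, ?_⟩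
  apply Set.Subset.antisymm
  · intro f hf
    exact ⟨Set.mem_iInter₂.mpr fun Q _ => ⟨h𝒞L0.1 hf, f, hf, EventuallyEq.rfl⟩, h𝒞𝒳 hf⟩
  rintro f ⟨hfI, hf𝒳⟩
  by_contra hf𝒞
  obtain ⟨g₀, hg₀⟩ := h𝒞ne
  -- unpack the weak topology
  set φ : 𝒳 → (𝒴 → ℝ) := fun g => fun ν : 𝒴 => pairSM ν.1 g.1 with hφdef
  have hopen := @IsClosed.isOpen_compl _ (sigmaTopDual 𝒳 𝒴) _ h𝒞closed
  rw [sigmaTopDual] at hopen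
  obtain ⟨V, hV, hpre⟩ := isOpen_induced_iff.mp hopen
  rw [← hφdef] at hpre
  have hfxV : φ ⟨f, hf𝒳⟩ ∈ V := by
    have : (⟨f, hf𝒳⟩ : 𝒳) ∈ φ ⁻¹' V := by rw [hpre]; exact hf𝒞
    exact this
  obtain ⟨I, u, hu, hIV⟩ := isOpen_pi_iff.mp hV _ hfxV
  -- the key exclusion property
  have hkey : ∀ g, g ∈ 𝒞 → ∃ i ∈ I, pairSM (i : 𝒴).1 g ∉ u i := by
    intro g hg
    by_contra hcon
    push_neg at hcon
    have h2 : (⟨g, h𝒞𝒳 hg⟩ : 𝒳) ∈ φ ⁻¹' V := hIV fun i hi => hcon i hi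
    rw [hpre] at h2
    exact h2 hg
  -- balls inside the open coordinate sets
  have hball : ∀ i : I, ∃ δ > 0, Metric.ball (φ ⟨f, hf𝒳⟩ i.1) δ ⊆ u i.1 := fun i =>
    Metric.isOpen_iff.mp (hu i.1 i.2).1 _ (hu i.1 i.2).2
  choose δ hδpos hδ using hball
  obtain ⟨i₀, hi₀, _⟩ := hkey g₀ hg₀
  haveI : Nonempty I := ⟨⟨i₀, hi₀⟩⟩
  set ε : ℝ := Finset.univ.inf' Finset.univ_nonempty δ with hεdef
  have hε : 0 < ε := (Finset.lt_inf'_iff _).mpr fun i _ => hδpos i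
  have hεle : ∀ i : I, ε ≤ δ i := fun i => Finset.inf'_le _ (Finset.mem_univ i)
  -- the finite-dimensional picture
  set T : (Ω → ℝ) → (I → ℝ) := fun g i => pairSM (i.1 : 𝒴).1 g with hTdef
  have hK : Convex ℝ (T '' 𝒞) := by
    rintro _ ⟨x, hx, rfl⟩ _ ⟨y, hy, rfl⟩ a b ha hb hab
    refine ⟨a • x + b • y, h𝒞conv hx hy ha hb hab, ?_⟩
    funext i
    have := pairSM_comb (i.1 : 𝒴).1 a b (hint x (h𝒞𝒳 hx) _ (i.1 : 𝒴).2)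
      (hint y (h𝒞𝒳 hy) _ (i.1 : 𝒴).2)
    simp only [hTdef, Pi.add_apply, Pi.smul_apply, smul_eq_mul]
    exact this
  have hTf : T f ∉ closure (T '' 𝒞) := by
    intro hmem
    obtain ⟨y, ⟨g, hg, rfl⟩, hdist⟩ := Metric.mem_closure_iff.mp hmem ε hε
    obtain ⟨i, hiI, hiu⟩ := hkey g hg
    apply hiu
    apply hδ ⟨i, hiI⟩
    have h1 : dist (T g ⟨i, hiI⟩) (T f ⟨i, hiI⟩) ≤ dist (T g) (T f) :=
      dist_le_pi_dist _ _ _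
    have h2 : dist (T g) (T f) < ε := by rwa [dist_comm]
    have h3 : dist (T g ⟨i, hiI⟩) (T f ⟨i, hiI⟩) < δ ⟨i, hiI⟩ :=
      lt_of_le_of_lt h1 (lt_of_lt_of_le h2 (hεle ⟨i, hiI⟩))
    exact Metric.mem_ball.mpr h3
  obtain ⟨ℓ, u₀, hℓlt, hℓgt⟩ := geometric_hahn_banach_closed_point hK.closure
    isClosed_closure hTf
  -- coordinates of the functional
  set c : I → ℝ := fun i => ℓ (fun j => if i = j then 1 else 0) with hcdef
  have hrepr : ∀ x : I → ℝ, ℓ x = ∑ i, x i * c i := by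
    intro x
    conv_lhs => rw [pi_eq_sum_univ x, map_sum]
    refine Finset.sum_congr rfl fun i _ => ?_
    rw [_root_.map_smul, smul_eq_mul]
  -- the candidate dominating measure
  set ρ : SignedMeasure Ω := ∑ i : I, |c i| • tvSigned (i.1 : 𝒴).1 with hρdef
  have hρ𝒴 : ρ ∈ 𝒴 := by
    refine Finset.sum_induction _ (· ∈ 𝒴) (fun a b ha hb => h𝒴add a ha b hb) h𝒴zero ?_
    intro i _
    exact h𝒴smul _ _ (h𝒴tv _ (i.1 : 𝒴).2)
  have hρapp : ∀ A : Set Ω, ρ A = ∑ i : I, |c i| * tvSigned (i.1 : 𝒴).1 A := by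
    intro A
    rw [hρdef, sm_sum_apply]
    exact Finset.sum_congr rfl fun i _ => by rw [VectorMeasure.smul_apply, smul_eq_mul]
  have hρnonneg : ∀ A : Set Ω, MeasurableSet A → 0 ≤ ρ A := by
    intro A hA
    rw [hρapp]
    exact Finset.sum_nonneg fun i _ => mul_nonneg (abs_nonneg _) (tvSigned_nonneg _ hA)
  set m : ℝ := ρ Set.univ with hmdef
  have hm0 : 0 ≤ m := hρnonneg _ MeasurableSet.univ
  rcases eq_or_lt_of_le hm0 with hm | hm
  · -- degenerate case: the functional vanishes on all of `𝒳`
    have hterm : ∀ i : I, |c i| * tvSigned (i.1 : 𝒴).1 Set.univ = 0 := by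
      have := (Finset.sum_eq_zero_iff_of_nonneg fun i _ =>
        mul_nonneg (abs_nonneg (c i)) (tvSigned_nonneg _ MeasurableSet.univ)).mp
        (by rw [← hρapp]; exact hm.symm)
      exact fun i => this i (Finset.mem_univ i)
    have hzero : ∀ h : Ω → ℝ, ℓ (T h) = 0 := by
      intro h
      rw [hrepr]
      refine Finset.sum_eq_zero fun i _ => ?_
      rcases eq_or_ne (c i) 0 with hc | hc
      · rw [hc, mul_zero]
      · have htv : tvSigned (i.1 : 𝒴).1 Set.univ = 0 := by
          have := hterm i
          have habs : |c i| ≠ 0 := fun h' => hc (abs_eq_zero.mp h')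
          exact (mul_eq_zero.mp this).resolve_left habs
        rw [show T h i = pairSM (i.1 : 𝒴).1 h from rfl, pairSM_eq_zero _ htv, zero_mul]
    have h1 : ℓ (T g₀) < u₀ := hℓlt _ (subset_closure ⟨g₀, hg₀, rfl⟩)
    rw [hzero g₀] at h1
    rw [hzero f] at hℓgt
    exact absurd (h1.trans hℓgt) (lt_irrefl 0)
  · -- main case: build the probability measure
    set ν : SignedMeasure Ω := m⁻¹ • ρ with hνdef
    have hν𝒴 : ν ∈ 𝒴 := h𝒴smul _ _ hρ𝒴
    have hνapp : ∀ A : Set Ω, ν A = m⁻¹ * ρ A := fun A => by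
      rw [hνdef, VectorMeasure.smul_apply, smul_eq_mul]
    have hνnonneg : nonnegSM ν := fun A hA => by
      rw [hνapp]; exact mul_nonneg (inv_nonneg.mpr hm0) (hρnonneg A hA)
    have hneg0 : ν.toJordanDecomposition.negPart = 0 := negPart_eq_zero_of_nonneg ν hνnonneg
    have hQapp : ∀ A : Set Ω, MeasurableSet A →
        posMeas ν A = ENNReal.ofReal (ν A) := by
      intro A hA
      have h1 := sm_apply' ν hA
      rw [hneg0] at h1
      simp only [Measure.coe_zero, Pi.zero_apply, ENNReal.toReal_zero, sub_zero] at h1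
      rw [h1, posMeas, ENNReal.ofReal_toReal (measure_ne_top _ _)]
    have hQprob : IsProbabilityMeasure (posMeas ν) := by
      constructor
      rw [hQapp _ MeasurableSet.univ, hνapp, ← hmdef, inv_mul_cancel₀ (ne_of_gt hm)]
      simp
    have hQAC : AC 𝔓 (posMeas ν) := by
      intro N hN hpolar
      rw [hQapp _ hN]
      have htv : ∀ i : I, tvSigned (i.1 : 𝒴).1 N = 0 := by
        intro i
        have hca := h𝒴ca _ (i.1 : 𝒴).2 N hN hpolar
        rw [SignedMeasure.totalVariation, Measure.add_apply, add_eq_zero] at hca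
        rw [tvSigned_apply _ hN, hca.1, hca.2]
        simp
      have : ρ N = 0 := by
        rw [hρapp]
        exact Finset.sum_eq_zero fun i _ => by rw [htv i, mul_zero]
      rw [hνapp, this, mul_zero, ENNReal.ofReal_zero]
    have hQ𝒬 : posMeas ν ∈ {Q | Q ∈ PC 𝔓 ∧ ∃ ν' ∈ 𝒴, nonnegSM ν' ∧ Q = posMeas ν'} :=
      ⟨⟨hQprob, hQAC⟩, ν, hν𝒴, hνnonneg, rfl⟩
    -- use `f ∈ jSat (posMeas ν) 𝒞`
    obtain ⟨hfmeas, g, hg𝒞, hae⟩ : f ∈ jSat (posMeas ν) 𝒞 :=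
      Set.mem_iInter₂.mp hfI _ hQ𝒬
    have hgmeas : Measurable g := h𝒞L0.1 hg𝒞
    set N : Set Ω := {ω | ¬ f ω = g ω} with hNdef
    have hNmeas : MeasurableSet N := by
      have : MeasurableSet {ω | f ω = g ω} := measurableSet_eq_fun hfmeas hgmeas
      simpa [hNdef, Set.compl_setOf] using this.compl
    have hQN : posMeas ν N = 0 := ae_iff.mp hae
    have hνN : ν N = 0 := by
      have h1 := hQapp N hNmeas
      rw [hQN] at h1
      have h2 := ENNReal.ofReal_eq_zero.mp h1.symm
      exact le_antisymm h2 (hνnonneg N hNmeas)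
    have hρN : ρ N = 0 := by
      have := hνN
      rw [hνapp] at this
      rcases mul_eq_zero.mp this with h | h
      · exact absurd h (by positivity)
      · exact h
    have htvN : ∀ i : I, |c i| * tvSigned (i.1 : 𝒴).1 N = 0 := by
      have := (Finset.sum_eq_zero_iff_of_nonneg fun i _ =>
        mul_nonneg (abs_nonneg (c i)) (tvSigned_nonneg _ hNmeas)).mp
        (by rw [← hρapp]; exact hρN)
      exact fun i => this i (Finset.mem_univ i)
    have hTeq : ∀ i : I, T f i * c i = T g i * c i := by
      intro i
      rcases eq_or_ne (c i) 0 with hc | hc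
      · rw [hc, mul_zero, mul_zero]
      · have htv : tvSigned (i.1 : 𝒴).1 N = 0 := by
          have habs : |c i| ≠ 0 := fun h' => hc (abs_eq_zero.mp h')
          exact (mul_eq_zero.mp (htvN i)).resolve_left habs
        obtain ⟨hp0, hn0⟩ := parts_zero _ hNmeas htv
        have hTfg : pairSM (i.1 : 𝒴).1 f = pairSM (i.1 : 𝒴).1 g :=
          pairSM_congr _ (ae_iff.mpr hp0) (ae_iff.mpr hn0)
        rw [show T f i = pairSM (i.1 : 𝒴).1 f from rfl,
          show T g i = pairSM (i.1 : 𝒴).1 g from rfl, hTfg]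
    have hℓeq : ℓ (T f) = ℓ (T g) := by
      rw [hrepr, hrepr]
      exact Finset.sum_congr rfl fun i _ => hTeq i
    have h1 : ℓ (T g) < u₀ := hℓlt _ (subset_closure ⟨g, hg𝒞, rfl⟩)
    rw [← hℓeq] at h1
    exact absurd (h1.trans hℓgt) (lt_irrefl _)
end Robust
end

section
/- Let 𝒞 ⊂ L⁰_{c+} be non-empty and let 𝒬 ⊂ 𝔓_c(Ω) be non-empty with 𝒬 ⊂ sca_c and pairwise disjoint supports (for Q ≠ Q′ in 𝒬, S(Q) ∩ S(Q′) is 𝒫-polar). Then 𝒞°°_𝒬 = 𝒞**_𝒬, where 𝒞*_𝒬 := {Z ∈ L^∞_{c+} : sup_{Q∈𝒬} E_Q[ZX] ≤ 1 for all X ∈ 𝒞} and 𝒞**_𝒬 := {X ∈ L⁰_{c+} : sup_{Q∈𝒬} E_Q[ZX] ≤ 1 for all Z ∈ 𝒞*_𝒬}. -/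
open MeasureTheory Filter Set
open scoped ENNReal

namespace Robust

variable {Ω : Type*} [MeasurableSpace Ω]

/-- For a supported reduction family with pairwise disjoint supports, the
bipolar coincides with the bipolar for the uniform (supremum) polar. -/
theorem stmt17 {Ω : Type*} [MeasurableSpace Ω]
    (𝔓 : Set (Measure Ω)) (h𝔓ne : 𝔓.Nonempty)
    (h𝔓prob : ∀ P ∈ 𝔓, IsProbabilityMeasure P)
    (𝒞 : Set (Ω → ℝ)) (h𝒞L0 : IsL0Set 𝔓 𝒞) (h𝒞pos : 𝒞 ⊆ L0pos 𝔓) (h𝒞ne : 𝒞.Nonempty)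
    (𝒬 : Set (Measure Ω)) (h𝒬ne : 𝒬.Nonempty) (h𝒬 : 𝒬 ⊆ PC 𝔓)
    (S : Measure Ω → Set Ω)
    (hS : ∀ Q ∈ 𝒬, MeasurableSet (S Q) ∧ Q (S Q)ᶜ = 0 ∧
        ∀ N : Set Ω, MeasurableSet N → Q (N ∩ S Q) = 0 → ∀ P ∈ 𝔓, P (N ∩ S Q) = 0)
    (hdisj : ∀ Q ∈ 𝒬, ∀ Q' ∈ 𝒬, Q ≠ Q' → ∀ P ∈ 𝔓, P (S Q ∩ S Q') = 0) :
    bipolarPairs 𝔓 𝒬 (LinfPos 𝔓) 𝒞 = starBipolar 𝔓 𝒬 𝒞 := by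
  ext f
  constructor
  · rintro ⟨hf, hpol⟩
    refine ⟨hf, fun Z hZ => iSup₂_le fun Q hQ => ?_⟩
    exact hpol (Q, Z) ⟨hQ, hZ.1, fun g hg =>
      le_trans (le_iSup₂ (f := fun Q _ => EExp Q fun ω => Z ω * g ω) Q hQ) (hZ.2 g hg)⟩
  · rintro ⟨hf, hstar⟩
    refine ⟨hf, ?_⟩
    rintro ⟨Q, Z⟩ ⟨hQ, hZ, hZpol⟩
    obtain ⟨hSm, hScompl, hSsupp⟩ := hS Q hQ
    set Z' : Ω → ℝ := (S Q).indicator Z with hZ'def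
    have hZ'mem : Z' ∈ LinfPos 𝔓 := by
      obtain ⟨⟨hZmeas, m, hm, hbd⟩, hZpos⟩ := hZ
      refine ⟨⟨hZmeas.indicator hSm, m, hm, fun P hP => ?_⟩, fun P hP => ?_⟩
      · filter_upwards [hbd P hP] with ω hω
        by_cases h : ω ∈ S Q
        · simpa [Z', Set.indicator_of_mem h] using hω
        · simp [Z', Set.indicator_of_notMem h]
          exact le_of_lt hm
      · filter_upwards [hZpos P hP] with ω hω
        by_cases h : ω ∈ S Q
        · simpa [Z', Set.indicator_of_mem h] using hω
        · simp [Z', Set.indicator_of_notMem h]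
    -- For Q' ∈ 𝒬 with Q' ≠ Q, everything involving Z' has zero integral
    have hkey0 : ∀ (g : Ω → ℝ), ∀ Q' ∈ 𝒬, Q' ≠ Q →
        EExp Q' (fun ω => Z' ω * g ω) = 0 := by
      intro g Q' hQ' hne
      obtain ⟨hS'm, hS'compl, _⟩ := hS Q' hQ'
      have hpolar : ∀ P ∈ 𝔓, P (S Q ∩ S Q') = 0 := hdisj Q hQ Q' hQ' (fun h => hne h.symm)
      have hint : Q' (S Q ∩ S Q') = 0 := (h𝒬 hQ').2 _ (hSm.inter hS'm) hpolar
      have hQ'S : Q' (S Q) = 0 := by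
        have hsub : S Q ⊆ (S Q ∩ S Q') ∪ (S Q')ᶜ := by
          intro ω hω
          by_cases h : ω ∈ S Q'
          · exact Or.inl ⟨hω, h⟩
          · exact Or.inr h
        have := (measure_mono (μ := Q') hsub).trans (measure_union_le _ _)
        rw [hint, hS'compl] at this
        simpa using this
      have hb : ∀ ω, ENNReal.ofReal (Z' ω * g ω) ≤ (S Q).indicator (fun _ => (⊤ : ℝ≥0∞)) ω := by
        intro ω
        by_cases h : ω ∈ S Q
        · simp [Set.indicator_of_mem h]
        · simp [Z', Set.indicator_of_notMem h]
      have := lintegral_mono hb (μ := Q')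
      rw [lintegral_indicator hSm, setLIntegral_const, hQ'S, mul_zero] at this
      exact le_antisymm this (zero_le)
    -- On Q itself, Z' and Z give the same integrals
    have hkeyQ : ∀ g : Ω → ℝ, EExp Q (fun ω => Z' ω * g ω) = EExp Q (fun ω => Z ω * g ω) := by
      intro g
      refine lintegral_congr_ae ?_
      have hae : ∀ᵐ ω ∂Q, ω ∈ S Q := by
        rw [MeasureTheory.ae_iff]
        exact hScompl
      filter_upwards [hae] with ω hω
      simp [Z', Set.indicator_of_mem hω]
    have hZ'star : Z' ∈ starPolar 𝔓 𝒬 𝒞 := by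
      refine ⟨hZ'mem, fun g hg => iSup₂_le fun Q' hQ' => ?_⟩
      by_cases hne : Q' = Q
      · subst hne
        rw [hkeyQ g]
        exact hZpol g hg
      · rw [hkey0 g Q' hQ' hne]
        exact zero_le_one
    calc EExp Q (fun ω => Z ω * f ω) = EExp Q (fun ω => Z' ω * f ω) := (hkeyQ f).symm
      _ ≤ ⨆ Q' ∈ 𝒬, EExp Q' (fun ω => Z' ω * f ω) :=
          le_iSup₂ (f := fun Q' _ => EExp Q' fun ω => Z' ω * f ω) Q hQ
      _ ≤ 1 := hstar Z' hZ'star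
end Robust
end

section
/- Let 𝒞 ⊂ L⁰_{c+} and 𝒬 ⊂ 𝔓_c(Ω) be non-empty. Define 𝒞◇_𝒬 := {(Q,Z) ∈ 𝒬 × L⁰_{c+} : E_Q[ZX] ≤ 1 for all X ∈ 𝒞} and 𝒞◇◇_𝒬 := {X ∈ L⁰_{c+} : E_Q[ZX] ≤ 1 for all (Q,Z) ∈ 𝒞◇_𝒬}. Then 𝒞◇◇_𝒬 = 𝒞°°_𝒬, where 𝒞°°_𝒬 is the bipolar taken with dual elements (Q,Z) ∈ 𝒬 × L^∞_{c+}. -/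
open MeasureTheory Filter Set
open scoped ENNReal

namespace Robust

variable {Ω : Type*} [MeasurableSpace Ω]

/-- A `𝔓`-q.s. nonnegative measurable function is `Q`-a.e. nonnegative for `Q` absolutely
continuous w.r.t. the `𝔓`-polar sets. -/
lemma qsle_zero_ae {Ω : Type*} [MeasurableSpace Ω] {𝔓 : Set (Measure Ω)} {Q : Measure Ω}
    (hQ : AC 𝔓 Q) {g : Ω → ℝ} (hg : Measurable g)
    (h : QSLe 𝔓 (fun _ => 0) g) : 0 ≤ᵐ[Q] g := by
  have hmeas : MeasurableSet {ω | ¬ (0 : Ω → ℝ) ω ≤ g ω} := by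
    simpa [not_le] using measurableSet_lt hg measurable_const
  have hnull : Q {ω | ¬ (0 : Ω → ℝ) ω ≤ g ω} = 0 := by
    refine hQ _ hmeas fun P hP => ?_
    have := h P hP
    rw [Filter.EventuallyLE, MeasureTheory.ae_iff] at this
    exact this
  rw [Filter.EventuallyLE, MeasureTheory.ae_iff]
  exact hnull

/-- The bipolar with unbounded dual test functions `(Q, Z) ∈ 𝒬 × L⁰_{c+}`
coincides with the bipolar with bounded ones `(Q, Z) ∈ 𝒬 × L^∞_{c+}`. -/
theorem stmt18 {Ω : Type*} [MeasurableSpace Ω]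
    (𝔓 : Set (Measure Ω)) (h𝔓ne : 𝔓.Nonempty)
    (h𝔓prob : ∀ P ∈ 𝔓, IsProbabilityMeasure P)
    (𝒞 : Set (Ω → ℝ)) (h𝒞L0 : IsL0Set 𝔓 𝒞) (h𝒞pos : 𝒞 ⊆ L0pos 𝔓) (h𝒞ne : 𝒞.Nonempty)
    (𝒬 : Set (Measure Ω)) (h𝒬ne : 𝒬.Nonempty) (h𝒬 : 𝒬 ⊆ PC 𝔓) :
    bipolarPairs 𝔓 𝒬 (L0pos 𝔓) 𝒞 = bipolarPairs 𝔓 𝒬 (LinfPos 𝔓) 𝒞 := by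
  have hsub : LinfPos 𝔓 ⊆ L0pos 𝔓 := fun Z hZ => ⟨hZ.1.1, hZ.2⟩
  ext X
  constructor
  · rintro ⟨hXpos, hX⟩
    exact ⟨hXpos, fun p hp => hX p ⟨hp.1, hsub hp.2.1, hp.2.2⟩⟩
  · rintro ⟨hXpos, hX⟩
    refine ⟨hXpos, ?_⟩
    rintro ⟨Q, Z⟩ ⟨hQ, hZ, hpol⟩
    obtain ⟨hQprob, hQac⟩ := h𝒬 hQ
    obtain ⟨hZmeas, hZqs⟩ := hZ
    obtain ⟨hXmeas, hXqs⟩ := hXpos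
    -- `Q`-a.e. nonnegativity facts
    have hZae : 0 ≤ᵐ[Q] Z := qsle_zero_ae hQac hZmeas hZqs
    -- the truncations
    set W : Ω → ℝ := fun ω => max (Z ω) 0 with hW
    have hWmeas : Measurable W := hZmeas.max measurable_const
    set Zn : ℕ → Ω → ℝ := fun n ω => min (W ω) n with hZn
    have hZnmeas : ∀ n, Measurable (Zn n) := fun n => hWmeas.min measurable_const
    have hZnnonneg : ∀ n ω, 0 ≤ Zn n ω := fun n ω =>
      le_min (le_max_right _ _) (Nat.cast_nonneg n)
    have hZnle : ∀ᵐ ω ∂Q, ∀ n, Zn n ω ≤ Z ω := by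
      filter_upwards [hZae] with ω hω n
      have hω' : (0:ℝ) ≤ Z ω := hω
      exact (min_le_left _ _).trans (max_le le_rfl hω')
    -- each truncation gives a pair in the bounded polar
    have hpair : ∀ n : ℕ, ((Q, Zn n) : Measure Ω × (Ω → ℝ)) ∈ polarPairs 𝒬 (LinfPos 𝔓) 𝒞 := by
      intro n
      refine ⟨hQ, ⟨⟨hZnmeas n, (n : ℝ) + 1, by positivity, fun P hP => ?_⟩,
        fun P hP => Filter.Eventually.of_forall fun ω => hZnnonneg n ω⟩, ?_⟩
      · refine Filter.Eventually.of_forall fun ω => ?_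
        show |Zn n ω| ≤ (n:ℝ) + 1
        rw [abs_of_nonneg (hZnnonneg n ω)]
        exact (min_le_right _ _).trans (by linarith)
      · intro f hf
        refine le_trans ?_ (hpol f hf)
        obtain ⟨hfmeas, hfqs⟩ := h𝒞pos hf
        have hfae : 0 ≤ᵐ[Q] f := qsle_zero_ae hQac hfmeas hfqs
        refine lintegral_mono_ae ?_
        filter_upwards [hfae, hZnle] with ω hf0 hZle
        exact ENNReal.ofReal_le_ofReal (mul_le_mul_of_nonneg_right (hZle n) hf0)
    -- monotone convergence
    have key : EExp Q (fun ω => Z ω * X ω) = EExp Q (fun ω => W ω * X ω) := by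
      refine lintegral_congr_ae ?_
      filter_upwards [hZae] with ω hω
      have hω' : (0:ℝ) ≤ Z ω := hω
      simp [hW, max_eq_left hω']
    rw [key]
    have hmono : Monotone fun n : ℕ => fun ω => ENNReal.ofReal (Zn n ω * X ω) := by
      intro m n hmn
      intro ω
      rcases le_or_gt 0 (X ω) with hx | hx
      · exact ENNReal.ofReal_le_ofReal
          (mul_le_mul_of_nonneg_right (min_le_min le_rfl (Nat.cast_le.2 hmn)) hx)
      · have : Zn m ω * X ω ≤ 0 := mul_nonpos_of_nonneg_of_nonpos (hZnnonneg m ω) hx.le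
        simp [ENNReal.ofReal_eq_zero.2 this]
    have hsup : ∀ ω, (⨆ n : ℕ, ENNReal.ofReal (Zn n ω * X ω))
        = ENNReal.ofReal (W ω * X ω) := by
      intro ω
      refine le_antisymm (iSup_le fun n => ?_) ?_
      · rcases le_or_gt 0 (X ω) with hx | hx
        · exact ENNReal.ofReal_le_ofReal (mul_le_mul_of_nonneg_right (min_le_left _ _) hx)
        · have : Zn n ω * X ω ≤ 0 := mul_nonpos_of_nonneg_of_nonpos (hZnnonneg n ω) hx.le
          simp [ENNReal.ofReal_eq_zero.2 this]
      · refine le_iSup_of_le ⌈W ω⌉₊ (le_of_eq ?_)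
        have hWn : W ω ≤ (⌈W ω⌉₊ : ℝ) := Nat.le_ceil _
        simp only [hZn]
        rw [min_eq_left hWn]
    have : EExp Q (fun ω => W ω * X ω)
        = ⨆ n : ℕ, ∫⁻ ω, ENNReal.ofReal (Zn n ω * X ω) ∂Q := by
      rw [EExp, ← lintegral_iSup (f := fun n ω => ENNReal.ofReal (Zn n ω * X ω))
        (fun n => ((hZnmeas n).mul hXmeas).ennreal_ofReal) hmono]
      exact lintegral_congr fun ω => (hsup ω).symm
    rw [this]
    exact iSup_le fun n => hX (Q, Zn n) (hpair n)
end Robust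
end
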